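/- Let f ∈ K[e_1,…,e_n] and let t ≥ 1. If π^{(d)}(f) = 0 for every d with 1 ≤ d ≤ t, then for every variable e_j the partial derivative ∂f/∂e_j satisfies π^{(t-1)}(∂f/∂e_j) = 0. -/
import Mathlib


open MvPolynomial

/-- The monomial `e^a = e_1^{a_1} ⋯ e_n^{a_n}` in `K[e_1,…,e_n]`. -/
noncomputable def eMon (K : Type*) [CommSemiring K] {n : ℕ} (a : Fin n → ℕ) :
    MvPolynomial (Fin n) K :=
  ∏ i, X i ^ a i

/-- The monomial map `φ_A : K[e_1,…,e_n] → K[x_1,…,x_m]`, `e_i ↦ x^{ς_i}` where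
`ς_i` is the `i`-th column of `A`. -/
noncomputable def phiA (K : Type*) [CommSemiring K] {m n : ℕ}
    (A : Matrix (Fin m) (Fin n) ℕ) :
    MvPolynomial (Fin n) K →ₐ[K] MvPolynomial (Fin m) K :=
  aeval fun i => ∏ j, X j ^ A j i

/-- The toric ideal `I_A = ker φ_A`. -/
noncomputable def toricIdeal (K : Type*) [CommRing K] {m n : ℕ}
    (A : Matrix (Fin m) (Fin n) ℕ) : Ideal (MvPolynomial (Fin n) K) :=
  RingHom.ker (phiA K A).toRingHom

/-- The `K`-linear map `π^{(s)}` sending `e^α ↦ α ⊗ ⋯ ⊗ α` (s factors), where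
`(K^n)^{⊗ s}` is identified with functions `(Fin s → Fin n) → K`. -/
noncomputable def piMap (K : Type*) [CommSemiring K] {n : ℕ} (s : ℕ)
    (f : MvPolynomial (Fin n) K) : (Fin s → Fin n) → K :=
  fun j => ∑ α ∈ f.support, f.coeff α * ∏ i : Fin s, (α (j i) : K)

/-- `V_{A,σ}`: the `K`-span of the monomials `e^α` with `Aα = σ`. -/
noncomputable def fiberSpace (K : Type*) [CommRing K] {m n : ℕ}
    (A : Matrix (Fin m) (Fin n) ℕ) (σ : Fin m → ℕ) :
    Submodule K (MvPolynomial (Fin n) K) :=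
  Submodule.span K { f | ∃ a : Fin n → ℕ, (∀ j, ∑ i, A j i * a i = σ j) ∧ f = eMon K a }

/-- The sum `f_σ` of those terms of `f` whose monomial lies in `V_{A,σ}`. -/
noncomputable def fiberComponent {K : Type*} [CommRing K] {m n : ℕ}
    (A : Matrix (Fin m) (Fin n) ℕ) (σ : Fin m → ℕ)
    (f : MvPolynomial (Fin n) K) : MvPolynomial (Fin n) K :=
  ∑ α ∈ f.support.filter (fun α => ∀ j, ∑ i, A j i * α i = σ j),
    monomial α (f.coeff α)

/-- For a prime ideal `I`, the `t`-th symbolic power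
`I^{(t)} = { f | f·g ∈ I^t for some g ∉ I }`. -/
def symbolicPower {R : Type*} [CommRing R] (I : Ideal R) (t : ℕ) : Set R :=
  { f | ∃ g, g ∉ I ∧ f * g ∈ I ^ t }

/-- The saturation `I : x^∞ = { f | x^k f ∈ I for some k }`. -/
def satPow {R : Type*} [CommRing R] (I : Ideal R) (x : R) : Ideal R where
  carrier := { f | ∃ k : ℕ, x ^ k * f ∈ I }
  zero_mem' := ⟨0, by simp⟩
  add_mem' := by
    rintro a b ⟨k, hk⟩ ⟨l, hl⟩
    refine ⟨k + l, ?_⟩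
    have h : x ^ (k + l) * (a + b) = x ^ l * (x ^ k * a) + x ^ k * (x ^ l * b) := by
      ring
    rw [h]
    exact Ideal.add_mem _ (Ideal.mul_mem_left _ _ hk) (Ideal.mul_mem_left _ _ hl)
  smul_mem' := by
    rintro c a ⟨k, hk⟩
    refine ⟨k, ?_⟩
    have h : x ^ k * (c • a) = c * (x ^ k * a) := by
      rw [smul_eq_mul]; ring
    rw [h]
    exact Ideal.mul_mem_left _ _ hk

/-- The positive part `u^+` of an integer vector. -/
def pPart {n : ℕ} (u : Fin n → ℤ) : Fin n → ℕ := fun i => (u i).toNat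

/-- The negative part `u^-` of an integer vector. -/
def nPart {n : ℕ} (u : Fin n → ℤ) : Fin n → ℕ := fun i => (-u i).toNat

/-- The binomial `f_u = e^{u^+} - e^{u^-}`. -/
noncomputable def binom (K : Type*) [CommRing K] {n : ℕ} (u : Fin n → ℤ) :
    MvPolynomial (Fin n) K := eMon K (pPart u) - eMon K (nPart u)

/-- The lattice `ker A ⊆ ℤ^n`. -/
def matKerZ {m n : ℕ} (A : Matrix (Fin m) (Fin n) ℕ) : Set (Fin n → ℤ) :=
  { u | ∀ j, ∑ i, (A j i : ℤ) * u i = 0 }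

/-- The product of all the variables `m = e_1 ⋯ e_n`. -/
noncomputable def mProd (K : Type*) [CommSemiring K] (n : ℕ) :
    MvPolynomial (Fin n) K := ∏ i, X i

section aux
variable {K : Type*} [Field K] {n : ℕ}

lemma piMap_eq_sum_subset (s : ℕ) (g : MvPolynomial (Fin n) K)
    {T : Finset ((Fin n) →₀ ℕ)} (hT : g.support ⊆ T) (jf : Fin s → Fin n) :
    piMap K s g jf = ∑ α ∈ T, g.coeff α * ∏ i : Fin s, (α (jf i) : K) :=
  Finset.sum_subset hT fun _ _ hx => by
    simp [MvPolynomial.notMem_support_iff.mp hx]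

noncomputable def piHom (s : ℕ) (jf : Fin s → Fin n) :
    MvPolynomial (Fin n) K →+ K where
  toFun g := piMap K s g jf
  map_zero' := by simp [piMap]
  map_add' g h := by
    show piMap K s (g + h) jf = piMap K s g jf + piMap K s h jf
    rw [piMap_eq_sum_subset s (g + h) (MvPolynomial.support_add) jf,
        piMap_eq_sum_subset s g (Finset.subset_union_left) jf,
        piMap_eq_sum_subset s h (Finset.subset_union_right) jf,
        ← Finset.sum_add_distrib]
    exact Finset.sum_congr rfl fun α _ => by rw [coeff_add]; ring

lemma piMap_monomial (s : ℕ) (α : (Fin n) →₀ ℕ) (cf : K) (jf : Fin s → Fin n) :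
    piMap K s (monomial α cf) jf = cf * ∏ i : Fin s, (α (jf i) : K) := by
  rw [piMap_eq_sum_subset s _ (MvPolynomial.support_monomial_subset) jf,
      Finset.sum_singleton, coeff_monomial, if_pos rfl]

end aux

lemma aux_main {K : Type*} [Field K] {n s : ℕ} (f : MvPolynomial (Fin n) K)
    (j : Fin n) (j' : Fin s → Fin n)
    (key : ∀ S : Finset (Fin s),
      ∑ β ∈ f.support, f.coeff β * ((β j : K) * ∏ i ∈ S, (β (j' i) : K)) = 0) :
    piMap K s (MvPolynomial.pderiv j f) j' = 0 := by
  classical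
  set c : Fin s → K := fun i => if j' i = j then 1 else 0 with hc
  have hf : (pderiv j f : MvPolynomial (Fin n) K)
      = ∑ β ∈ f.support, monomial (β - Finsupp.single j 1) (f.coeff β * β j) := by
    conv_lhs => rw [f.as_sum]
    rw [map_sum]
    exact Finset.sum_congr rfl fun β _ => pderiv_monomial
  have h1 : piMap K s (pderiv j f) j'
      = ∑ β ∈ f.support, (f.coeff β * (β j : ℕ)) *
          ∏ i : Fin s, (((β - Finsupp.single j 1 : Fin n →₀ ℕ) (j' i) : ℕ) : K) := by
    rw [hf]
    rw [show piMap K s (∑ β ∈ f.support, monomial (β - Finsupp.single j 1) (f.coeff β * β j)) j'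
        = (piHom s j') (∑ β ∈ f.support, monomial (β - Finsupp.single j 1) (f.coeff β * β j))
        from rfl, map_sum]
    exact Finset.sum_congr rfl fun β _ => piMap_monomial s _ _ j'
  rw [h1]
  have h2 : ∀ β ∈ f.support,
      (f.coeff β * (β j : ℕ)) *
          ∏ i : Fin s, (((β - Finsupp.single j 1 : Fin n →₀ ℕ) (j' i) : ℕ) : K)
      = f.coeff β * ((β j : K) * ∏ i : Fin s, ((β (j' i) : K) - c i)) := by
    intro β _
    rcases Nat.eq_zero_or_pos (β j) with h0 | h0
    · simp [h0]
    · have hprod : ∀ i : Fin s,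
          (((β - Finsupp.single j 1 : Fin n →₀ ℕ) (j' i) : ℕ) : K) = (β (j' i) : K) - c i := by
        intro i
        rw [Finsupp.tsub_apply, Finsupp.single_apply]
        rcases eq_or_ne (j' i) j with hij | hij
        · have hci : c i = 1 := by simp [hc, hij]
          rw [if_pos hij.symm, hci, hij, Nat.cast_sub h0, Nat.cast_one]
        · have hci : c i = 0 := by simp [hc, hij]
          rw [if_neg (fun hh => hij hh.symm), hci, Nat.sub_zero, sub_zero]
      rw [Finset.prod_congr rfl fun i _ => hprod i]
      ring
  rw [Finset.sum_congr rfl h2]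
  have h3 : ∀ β : Fin n →₀ ℕ,
      ∏ i : Fin s, ((β (j' i) : K) - c i)
      = ∑ S ∈ (Finset.univ : Finset (Fin s)).powerset,
          (∏ i ∈ S, (β (j' i) : K)) * ∏ i ∈ Finset.univ \ S, (-(c i)) := by
    intro β
    rw [show (fun i : Fin s => (β (j' i) : K) - c i)
        = fun i => (β (j' i) : K) + (-(c i)) from funext fun i => sub_eq_add_neg _ _]
    exact Finset.prod_add _ _ _
  calc ∑ β ∈ f.support, f.coeff β * ((β j : K) * ∏ i : Fin s, ((β (j' i) : K) - c i))
      = ∑ β ∈ f.support, ∑ S ∈ (Finset.univ : Finset (Fin s)).powerset,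
          (∏ i ∈ Finset.univ \ S, (-(c i))) *
            (f.coeff β * ((β j : K) * ∏ i ∈ S, (β (j' i) : K))) := by
        refine Finset.sum_congr rfl fun β _ => ?_
        rw [h3 β, Finset.mul_sum, Finset.mul_sum]
        exact Finset.sum_congr rfl fun S _ => by ring
    _ = ∑ S ∈ (Finset.univ : Finset (Fin s)).powerset,
          (∏ i ∈ Finset.univ \ S, (-(c i))) *
            ∑ β ∈ f.support, f.coeff β * ((β j : K) * ∏ i ∈ S, (β (j' i) : K)) := by
        rw [Finset.sum_comm]
        exact Finset.sum_congr rfl fun S _ => (Finset.mul_sum _ _ _).symm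
    _ = 0 := Finset.sum_eq_zero fun S _ => by rw [key S, mul_zero]

/-- If `π^{(d)}(f) = 0` for all `1 ≤ d ≤ t`, then
`π^{(t-1)}(∂f/∂e_j) = 0` for every variable `e_j`. -/
theorem piMap_pderiv_eq_zero
    {K : Type*} [Field K] [IsAlgClosed K] [CharZero K]
    {n : ℕ} (f : MvPolynomial (Fin n) K) (t : ℕ) (ht : 1 ≤ t)
    (h : ∀ d, 1 ≤ d → d ≤ t → piMap K d f = 0) (j : Fin n) :
    piMap K (t - 1) (MvPolynomial.pderiv j f) = 0 := by
  classical
  funext j'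
  show piMap K (t - 1) (MvPolynomial.pderiv j f) j' = 0
  refine aux_main f j j' fun S => ?_
  have hdt : S.card + 1 ≤ t := by
    have := S.card_le_univ
    simp only [Finset.card_univ, Fintype.card_fin] at this
    omega
  have h0 := congrFun (h (S.card + 1) (Nat.le_add_left 1 S.card) hdt)
    (Fin.cons j (fun i => j' (S.orderIsoOfFin rfl i)))
  rw [show (0 : (Fin (S.card + 1) → Fin n) → K) _ = 0 from rfl] at h0
  rw [← h0]
  unfold piMap
  refine Finset.sum_congr rfl fun β _ => ?_
  congr 1
  rw [Fin.prod_univ_succ]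
  simp only [Fin.cons_zero, Fin.cons_succ]
  congr 1
  rw [← Finset.prod_coe_sort S (fun i => (β (j' i) : K))]
  exact (Fintype.prod_equiv (S.orderIsoOfFin rfl).toEquiv _ _ (fun i => rfl)).symm
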